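/- Let U_1, …, U_n be nonempty finite sets and for each i let p_i and q_i be probability mass functions on U_i with p_i(u) > 0 for all u ∈ U_i. Let F : U_1 × ⋯ × U_n → ℝ satisfy |F(u)| ≤ M for all u. For each i and u_i ∈ U_i define Ã_i(u_i) = Σ_{u_{-i}} (∏_{j<i} q_j(u_j)) (∏_{j>i} p_j(u_j)) F(u) and A_i(u_i) = Σ_{u_{-i}} (∏_{j≠i} p_j(u_j)) F(u). Then Σ_{i=1}^n Σ_{u_i ∈ U_i} (q_i(u_i) − p_i(u_i)) (Ã_i(u_i) − A_i(u_i)) ≤ 2 n M · Σ_{j=1}^n KL(q_j ‖ p_j), where KL(q ‖ p) = Σ_u q(u) log(q(u)/p(u)). -/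

import Mathlib

open Real Finset

/-- auxiliary: `(x+1) log x - 2(x-1)` is monotone on `(0,∞)`. -/
lemma aux_m_mono : MonotoneOn (fun x : ℝ => (x+1) * Real.log x - 2*(x-1)) (Set.Ioi 0) := by
  have hderiv : ∀ x ∈ Set.Ioi (0:ℝ), HasDerivAt (fun x : ℝ => (x+1) * Real.log x - 2*(x-1))
      (Real.log x + (x+1) * x⁻¹ - 2) x := by
    intro x hx
    have hx0 : (0:ℝ) < x := hx
    have h1 : HasDerivAt (fun x : ℝ => (x+1) * Real.log x) (1 * Real.log x + (x+1) * x⁻¹) x :=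
      (((hasDerivAt_id x).add_const 1)).mul (Real.hasDerivAt_log hx0.ne')
    have h2 : HasDerivAt (fun x : ℝ => 2*(x-1)) 2 x := by
      simpa using ((hasDerivAt_id x).sub_const 1).const_mul 2
    exact (h1.sub h2).congr_deriv (by ring)
  apply monotoneOn_of_deriv_nonneg (convex_Ioi 0)
  · exact ContinuousOn.sub (by fun_prop (disch := intro x hx; exact ne_of_gt hx)) (by fun_prop)
  · rw [interior_Ioi]
    exact fun x hx => (hderiv x hx).differentiableAt.differentiableWithinAt
  · rw [interior_Ioi]
    intro x hx
    rw [(hderiv x hx).deriv]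
    have hx0 : (0:ℝ) < x := hx
    have hlog : 1 - x⁻¹ ≤ Real.log x := Real.one_sub_inv_le_log_of_pos hx0
    have : (x+1) * x⁻¹ = 1 + x⁻¹ := by field_simp
    rw [this]; linarith

lemma aux_m_sign {x : ℝ} (hx : 0 < x) :
    (1 ≤ x → 0 ≤ (x+1) * Real.log x - 2*(x-1)) ∧
    (x ≤ 1 → (x+1) * Real.log x - 2*(x-1) ≤ 0) := by
  have h1 : (1:ℝ) ∈ Set.Ioi (0:ℝ) := by norm_num
  have hm1 : ((1:ℝ)+1) * Real.log 1 - 2*((1:ℝ)-1) = 0 := by simp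
  constructor
  · intro h
    have := aux_m_mono h1 hx h
    simpa [hm1] using this
  · intro h
    have := aux_m_mono hx h1 h
    simpa [hm1] using this

/-- Key pointwise inequality: `3(x-1)² ≤ (x log x - x + 1) · 2(x+2)` for `x ≥ 0`. -/
lemma key_ineq {x : ℝ} (hx : 0 ≤ x) :
    3*(x-1)^2 ≤ (x * Real.log x - x + 1) * (2*(x+2)) := by
  rcases eq_or_lt_of_le hx with h0 | hx0
  · simp [← h0]; norm_num
  set h : ℝ → ℝ := fun x => (x * Real.log x - x + 1) * (2*(x+2)) - 3*(x-1)^2 with hh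
  have hderiv : ∀ y ∈ Set.Ioi (0:ℝ), HasDerivAt h
      (4*((y+1) * Real.log y - 2*(y-1))) y := by
    intro y hy
    have hy0 : (0:ℝ) < y := hy
    have hxl : HasDerivAt (fun y : ℝ => y * Real.log y) (Real.log y + 1) y := by
      have := (hasDerivAt_id y).mul (Real.hasDerivAt_log hy0.ne')
      have hyy : y * y⁻¹ = 1 := mul_inv_cancel₀ hy0.ne'
      exact this.congr_deriv (by simp only [id_eq, one_mul, hyy])
    have h1 : HasDerivAt (fun y : ℝ => y * Real.log y - y + 1) (Real.log y) y := by
      simpa using (hxl.sub (hasDerivAt_id y)).add_const 1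
    have h2 : HasDerivAt (fun y : ℝ => 2*(y+2)) 2 y := by
      simpa using ((hasDerivAt_id y).add_const 2).const_mul 2
    have h3 : HasDerivAt (fun y : ℝ => 3*(y-1)^2) (3*(2*(y-1))) y := by
      have := (((hasDerivAt_id y).sub_const 1).pow 2).const_mul 3
      simpa using this
    have := (h1.mul h2).sub h3
    exact this.congr_deriv (by ring)
  have hcont : ContinuousOn h (Set.Ioi (0:ℝ)) := fun y hy =>
    ((hderiv y hy).differentiableAt.continuousAt).continuousWithinAt
  have h1mem : (1:ℝ) ∈ Set.Ioi (0:ℝ) := by norm_num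
  have hh1 : h 1 = 0 := by simp [hh]
  have hkey : 0 ≤ h x := by
    rcases le_total 1 x with hge | hle
    · -- monotone on [1, ∞)
      have hmono : MonotoneOn h (Set.Ici (1:ℝ)) := by
        apply monotoneOn_of_deriv_nonneg (convex_Ici 1)
        · exact hcont.mono (fun y hy => (show (0:ℝ) < y from lt_of_lt_of_le one_pos hy))
        · rw [interior_Ici]
          exact fun y hy => (hderiv y (show (0:ℝ) < y from lt_trans one_pos hy)).differentiableAt.differentiableWithinAt
        · rw [interior_Ici]
          intro y hy
          rw [(hderiv y (show (0:ℝ) < y from lt_trans one_pos hy)).deriv]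
          have := (aux_m_sign (lt_trans one_pos hy)).1 (le_of_lt hy)
          linarith
      have := hmono (by norm_num : (1:ℝ) ∈ Set.Ici 1) hge hge
      rw [hh1] at this; exact this
    · -- antitone on (0, 1]
      have hanti : AntitoneOn h (Set.Ioc (0:ℝ) 1) := by
        apply antitoneOn_of_deriv_nonpos (convex_Ioc 0 1)
        · exact hcont.mono (fun y hy => hy.1)
        · rw [interior_Ioc]
          exact fun y hy => (hderiv y hy.1).differentiableAt.differentiableWithinAt
        · rw [interior_Ioc]
          intro y hy
          rw [(hderiv y hy.1).deriv]
          have := (aux_m_sign hy.1).2 (le_of_lt hy.2)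
          linarith
      have := hanti ⟨hx0, hle⟩ (by norm_num : (1:ℝ) ∈ Set.Ioc 0 1) hle
      rw [hh1] at this; exact this
  simpa [hh] using hkey

lemma pointwise_ineq {p q : ℝ} (hp : 0 < p) (hq : 0 ≤ q) :
    3*(q-p)^2 ≤ (q * Real.log (q/p) - q + p) * (2*(q+2*p)) := by
  have hx : (0:ℝ) ≤ q / p := div_nonneg hq hp.le
  have h := key_ineq hx
  have h2 := mul_le_mul_of_nonneg_left h (le_of_lt (mul_pos hp hp) : (0:ℝ) ≤ p*p)
  have e1 : p*p * (3*(q/p-1)^2) = 3*(q-p)^2 := by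
    field_simp; try ring
  have e2 : p*p * ((q/p * Real.log (q/p) - q/p + 1) * (2*(q/p+2)))
      = (q * Real.log (q/p) - q + p) * (2*(q+2*p)) := by
    field_simp; try ring
  rw [e1, e2] at h2
  exact h2

/-- **Pinsker's inequality** for finite probability mass functions. -/
lemma pinsker {α : Type*} [Fintype α] (p q : α → ℝ)
    (hp0 : ∀ x, 0 < p x) (hp1 : ∑ x, p x = 1)
    (hq0 : ∀ x, 0 ≤ q x) (hq1 : ∑ x, q x = 1) :
    (∑ x, |q x - p x|)^2 ≤ 2 * ∑ x, q x * Real.log (q x / p x) := by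
  have hden : ∀ x, (0:ℝ) < q x + 2 * p x := fun x => by
    have := hp0 x; have := hq0 x; linarith
  set f : α → ℝ := fun x => |q x - p x| / Real.sqrt (q x + 2 * p x) with hf
  set g : α → ℝ := fun x => Real.sqrt (q x + 2 * p x) with hg
  have hfg : ∀ x, f x * g x = |q x - p x| := fun x =>
    div_mul_cancel₀ _ (Real.sqrt_ne_zero'.2 (hden x)) 
  have hCS := Finset.sum_mul_sq_le_sq_mul_sq Finset.univ f g
  have hsq_g : ∀ x, g x ^ 2 = q x + 2 * p x := fun x =>
    Real.sq_sqrt (hden x).le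
  have hsq_f : ∀ x, f x ^ 2 = (q x - p x)^2 / (q x + 2 * p x) := by
    intro x
    rw [hf, div_pow, sq_abs, hsq_g x]
  have hsum_g : ∑ x, g x ^ 2 = 3 := by
    simp only [hsq_g, Finset.sum_add_distrib, ← Finset.mul_sum, hp1, hq1]
    norm_num
  have hsum_f : 3 * ∑ x, f x ^ 2 ≤ 2 * ∑ x, q x * Real.log (q x / p x) := by
    have key : ∀ x, 3 * f x ^ 2 ≤ 2*(q x * Real.log (q x / p x) - q x + p x) := by
      intro x
      rw [hsq_f]
      calc 3 * ((q x - p x)^2 / (q x + 2*p x)) = 3 * (q x - p x)^2 / (q x + 2*p x) := by ring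
        _ ≤ 2*(q x * Real.log (q x / p x) - q x + p x) := by
            rw [div_le_iff₀ (hden x)]
            calc 3 * (q x - p x)^2 = 3*(q x - p x)^2 := by ring
              _ ≤ (q x * Real.log (q x / p x) - q x + p x) * (2*(q x+2*p x)) :=
                  pointwise_ineq (hp0 x) (hq0 x)
              _ = 2*(q x * Real.log (q x / p x) - q x + p x) * (q x + 2*p x) := by ring
    calc 3 * ∑ x, f x ^ 2 = ∑ x, 3 * f x ^ 2 := by rw [Finset.mul_sum]
      _ ≤ ∑ x, 2*(q x * Real.log (q x / p x) - q x + p x) :=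
          Finset.sum_le_sum (fun x _ => key x)
      _ = 2 * ∑ x, q x * Real.log (q x / p x) := by
          simp only [mul_sub, mul_add, Finset.sum_add_distrib, Finset.sum_sub_distrib,
            ← Finset.mul_sum, hp1, hq1]
          ring
  calc (∑ x, |q x - p x|)^2 = (∑ x, f x * g x)^2 := by simp_rw [hfg]
    _ ≤ (∑ x, f x ^ 2) * ∑ x, g x ^ 2 := hCS
    _ = 3 * ∑ x, f x ^ 2 := by rw [hsum_g]; ring
    _ ≤ 2 * ∑ x, q x * Real.log (q x / p x) := hsum_f

lemma prod_split {ι : Type*} [LinearOrder ι] {s : Finset ι} {k : ι} (hk : k ∈ s)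
    (g : ι → ℝ) :
    ∏ j ∈ s, g j
      = (∏ j ∈ s.filter (· < k), g j) * g k * ∏ j ∈ s.filter (fun j => k < j), g j := by
  classical
  rw [← Finset.prod_filter_mul_prod_filter_not s (· < k)]
  have hs : s.filter (fun j => ¬ j < k) = insert k (s.filter (fun j => k < j)) := by
    ext j
    simp only [Finset.mem_filter, Finset.mem_insert, not_lt]
    constructor
    · rintro ⟨hj, hkj⟩
      rcases eq_or_lt_of_le hkj with h | h
      · exact Or.inl h.symm
      · exact Or.inr ⟨hj, h⟩
    · rintro (rfl | ⟨hj, h⟩)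
      · exact ⟨hk, le_refl _⟩
      · exact ⟨hj, h.le⟩
  rw [hs, Finset.prod_insert (by simp)]
  ring

lemma prod_telescope {ι : Type*} [LinearOrder ι] (s : Finset ι) (Q P : ι → ℝ) :
    ∏ j ∈ s, Q j - ∏ j ∈ s, P j
      = ∑ k ∈ s, (∏ j ∈ s.filter (· < k), Q j) * (Q k - P k)
          * ∏ j ∈ s.filter (fun j => k < j), P j := by
  classical
  induction s using Finset.induction_on_max with
  | empty => simp
  | insert a s ha ih =>
    have has : a ∉ s := fun h => lt_irrefl a (ha a h)
    rw [Finset.prod_insert has, Finset.prod_insert has, Finset.sum_insert has]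
    have e1 : (insert a s).filter (· < a) = s := by
      ext j
      simp only [Finset.mem_filter, Finset.mem_insert]
      constructor
      · rintro ⟨rfl | hj, h⟩
        · exact absurd h (lt_irrefl _)
        · exact hj
      · exact fun hj => ⟨Or.inr hj, ha j hj⟩
    have e2 : (insert a s).filter (fun j => a < j) = ∅ := by
      ext j
      simp only [Finset.mem_filter, Finset.mem_insert, Finset.notMem_empty, iff_false, not_and]
      rintro (rfl | hj)
      · exact lt_irrefl _
      · exact fun h => absurd h (not_lt.2 (ha j hj).le)
    have e3 : ∀ k ∈ s, (insert a s).filter (· < k) = s.filter (· < k) := by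
      intro k hk
      ext j
      simp only [Finset.mem_filter, Finset.mem_insert]
      constructor
      · rintro ⟨rfl | hj, h⟩
        · exact absurd (lt_trans (ha k hk) h) (lt_irrefl _)
        · exact ⟨hj, h⟩
      · exact fun ⟨hj, h⟩ => ⟨Or.inr hj, h⟩
    have e4 : ∀ k ∈ s, (insert a s).filter (fun j => k < j)
        = insert a (s.filter (fun j => k < j)) := by
      intro k hk
      ext j
      simp only [Finset.mem_filter, Finset.mem_insert]
      constructor
      · rintro ⟨rfl | hj, h⟩
        · exact Or.inl rfl
        · exact Or.inr ⟨hj, h⟩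
      · rintro (rfl | ⟨hj, h⟩)
        · exact ⟨Or.inl rfl, ha k hk⟩
        · exact ⟨Or.inr hj, h⟩
    rw [e1, e2]
    have e5 : ∀ k ∈ s, (∏ j ∈ (insert a s).filter (· < k), Q j) * (Q k - P k)
          * ∏ j ∈ (insert a s).filter (fun j => k < j), P j
        = P a * ((∏ j ∈ s.filter (· < k), Q j) * (Q k - P k)
          * ∏ j ∈ s.filter (fun j => k < j), P j) := by
      intro k hk
      rw [e3 k hk, e4 k hk,
        Finset.prod_insert (fun h => has (Finset.mem_filter.1 h).1)]
      ring
    rw [Finset.sum_congr rfl e5, ← Finset.mul_sum, ← ih]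
    simp only [Finset.prod_empty]
    ring

lemma sum_indicator_prod {n : ℕ} {U : Fin n → Type*} [∀ i, Fintype (U i)]
    [∀ i, DecidableEq (U i)] (i : Fin n) (x : U i) (g : ∀ j, U j → ℝ) :
    ∑ u : ∀ j, U j, (if u i = x then 1 else 0) * ∏ j ∈ Finset.univ.erase i, g j (u j)
      = ∏ j ∈ Finset.univ.erase i, ∑ y, g j y := by
  classical
  set h : ∀ j, U j → ℝ := Function.update g i (fun y => if y = x then 1 else 0) with hh
  have key : ∀ u : ∀ j, U j,
      (if u i = x then 1 else 0) * ∏ j ∈ Finset.univ.erase i, g j (u j)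
        = ∏ j, h j (u j) := by
    intro u
    rw [← Finset.mul_prod_erase Finset.univ (fun j => h j (u j)) (Finset.mem_univ i)]
    congr 1
    · rw [hh, Function.update_self]
    · exact Finset.prod_congr rfl (fun j hj => by
        rw [hh, Function.update_of_ne (Finset.ne_of_mem_erase hj)])
  simp_rw [key]
  rw [← Fintype.prod_sum h,
    ← Finset.mul_prod_erase Finset.univ (fun j => ∑ y, h j y) (Finset.mem_univ i)]
  have h1 : ∑ y, h i y = 1 := by
    rw [hh, Function.update_self]
    simp
  rw [h1, one_mul]
  exact Finset.prod_congr rfl (fun j hj => by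
    rw [hh, Function.update_of_ne (Finset.ne_of_mem_erase hj)])

lemma term_bound {n : ℕ} {U : Fin n → Type*} [∀ i, Fintype (U i)] [∀ i, Nonempty (U i)]
    [∀ i, DecidableEq (U i)]
    (p q : ∀ i, U i → ℝ) (M : ℝ)
    (hp0 : ∀ i, ∀ x : U i, 0 ≤ p i x) (hp1 : ∀ i, ∑ x : U i, p i x = 1)
    (hq0 : ∀ i, ∀ x : U i, 0 ≤ q i x) (hq1 : ∀ i, ∑ x : U i, q i x = 1)
    (F : (∀ i, U i) → ℝ) (hF : ∀ u, |F u| ≤ M)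
    (i : Fin n) (x : U i) (k : Fin n) (hk : k ∈ Finset.univ.erase i) :
    |∑ u : ∀ j, U j, (if u i = x then
        (∏ j ∈ (Finset.univ.erase i).filter (· < k), q j (u j))
          * (q k (u k) - p k (u k))
          * (∏ j ∈ (Finset.univ.erase i).filter (fun j => k < j), p j (u j)) * F u
      else 0)|
      ≤ M * ∑ y, |q k y - p k y| := by
  classical
  set T := Finset.univ.erase i with hT
  set g : ∀ j, U j → ℝ :=
    Function.update (fun j => if j < k then q j else p j) k
      (fun y => |q k y - p k y|) with hg
  have hg0 : ∀ j y, 0 ≤ g j y := by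
    intro j y
    rw [hg]
    rcases eq_or_ne j k with rfl | hjk
    · rw [Function.update_self]; exact abs_nonneg _
    · rw [Function.update_of_ne hjk]
      by_cases hjk2 : j < k
      · rw [if_pos hjk2]; exact hq0 j y
      · rw [if_neg hjk2]; exact hp0 j y
  have habs : ∀ u : ∀ j, U j,
      |(∏ j ∈ T.filter (· < k), q j (u j)) * (q k (u k) - p k (u k))
          * (∏ j ∈ T.filter (fun j => k < j), p j (u j))|
        = ∏ j ∈ T, g j (u j) := by
    intro u
    rw [prod_split hk]
    have e1 : ∏ j ∈ T.filter (· < k), g j (u j) = ∏ j ∈ T.filter (· < k), q j (u j) :=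
      Finset.prod_congr rfl (fun j hj => by
        have hjk : j < k := (Finset.mem_filter.1 hj).2
        rw [hg, Function.update_of_ne hjk.ne]
        simp [hjk])
    have e2 : ∏ j ∈ T.filter (fun j => k < j), g j (u j)
        = ∏ j ∈ T.filter (fun j => k < j), p j (u j) :=
      Finset.prod_congr rfl (fun j hj => by
        have hjk : k < j := (Finset.mem_filter.1 hj).2
        rw [hg, Function.update_of_ne hjk.ne']
        simp [not_lt.2 hjk.le])
    have e3 : g k (u k) = |q k (u k) - p k (u k)| := by rw [hg, Function.update_self]
    rw [e1, e2, e3, abs_mul, abs_mul,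
      abs_of_nonneg (Finset.prod_nonneg (fun j _ => hq0 j (u j))),
      abs_of_nonneg (Finset.prod_nonneg (fun j _ => hp0 j (u j)))]
  have hsum : ∑ y, g k y = ∑ y, |q k y - p k y| := by rw [hg, Function.update_self]
  have hMnn : 0 ≤ M := le_trans (abs_nonneg _) (hF (Classical.arbitrary _))
  have hone : ∀ j ∈ T, j ≠ k → ∑ y, g j y = 1 := by
    intro j _ hjk
    rw [hg, Function.update_of_ne hjk]
    by_cases hjk2 : j < k
    · rw [if_pos hjk2]; exact hq1 j
    · rw [if_neg hjk2]; exact hp1 j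
  calc |∑ u : ∀ j, U j, (if u i = x then
        (∏ j ∈ T.filter (· < k), q j (u j)) * (q k (u k) - p k (u k))
          * (∏ j ∈ T.filter (fun j => k < j), p j (u j)) * F u else 0)|
      ≤ ∑ u : ∀ j, U j, |if u i = x then
        (∏ j ∈ T.filter (· < k), q j (u j)) * (q k (u k) - p k (u k))
          * (∏ j ∈ T.filter (fun j => k < j), p j (u j)) * F u else 0| :=
        Finset.abs_sum_le_sum_abs _ _
    _ ≤ ∑ u : ∀ j, U j, ((if u i = x then 1 else 0) * ∏ j ∈ T, g j (u j)) * M := by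
        apply Finset.sum_le_sum
        intro u _
        by_cases h : u i = x
        · rw [if_pos h, if_pos h, one_mul, abs_mul, habs u]
          exact mul_le_mul_of_nonneg_left (hF u)
            (Finset.prod_nonneg (fun j _ => hg0 j (u j)))
        · rw [if_neg h, if_neg h, zero_mul, zero_mul, abs_zero]
    _ = (∑ u : ∀ j, U j, (if u i = x then 1 else 0) * ∏ j ∈ T, g j (u j)) * M := by
        rw [Finset.sum_mul]
    _ = (∏ j ∈ T, ∑ y, g j y) * M := by rw [hT, sum_indicator_prod]
    _ = (∑ y, |q k y - p k y|) * M := by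
        rw [Finset.prod_eq_single_of_mem k hk hone, hsum]
    _ = M * ∑ y, |q k y - p k y| := mul_comm _ _

lemma adv_diff_bound {n : ℕ} {U : Fin n → Type*} [∀ i, Fintype (U i)] [∀ i, Nonempty (U i)]
    [∀ i, DecidableEq (U i)]
    (p q : ∀ i, U i → ℝ) (M : ℝ)
    (hp0 : ∀ i, ∀ x : U i, 0 ≤ p i x) (hp1 : ∀ i, ∑ x : U i, p i x = 1)
    (hq0 : ∀ i, ∀ x : U i, 0 ≤ q i x) (hq1 : ∀ i, ∑ x : U i, q i x = 1)
    (F : (∀ i, U i) → ℝ) (hF : ∀ u, |F u| ≤ M)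
    (Atil A : ∀ i, U i → ℝ)
    (hAtil : ∀ i, ∀ x : U i, Atil i x =
      ∑ u : ∀ j, U j, if u i = x then
          (∏ j ∈ Finset.univ.filter (fun j => j < i), q j (u j)) *
            (∏ j ∈ Finset.univ.filter (fun j => i < j), p j (u j)) * F u
        else 0)
    (hA : ∀ i, ∀ x : U i, A i x =
      ∑ u : ∀ j, U j, if u i = x then
          (∏ j ∈ Finset.univ.filter (fun j => j ≠ i), p j (u j)) * F u
        else 0)
    (i : Fin n) (x : U i) :
    |Atil i x - A i x| ≤ M * ∑ k, ∑ y, |q k y - p k y| := by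
  classical
  set T := Finset.univ.erase i with hT
  set R : ∀ j, U j → ℝ := fun j => if j < i then q j else p j with hR
  have hMnn : 0 ≤ M := le_trans (abs_nonneg _) (hF (Classical.arbitrary _))
  -- rewrite Atil in terms of a single product over T
  have hAtil' : Atil i x = ∑ u : ∀ j, U j, if u i = x then
      (∏ j ∈ T, R j (u j)) * F u else 0 := by
    rw [hAtil]
    apply Finset.sum_congr rfl
    intro u _
    congr 1
    have hsplit := (Finset.prod_filter_mul_prod_filter_not T (· < i)
      (fun j => R j (u j))).symm
    have e1 : T.filter (· < i) = Finset.univ.filter (fun j => j < i) := by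
      ext j
      simp only [hT, Finset.mem_filter, Finset.mem_erase, Finset.mem_univ, true_and, and_true]
      exact ⟨fun h => h.2, fun h => ⟨h.ne, h⟩⟩
    have e2 : T.filter (fun j => ¬ j < i) = Finset.univ.filter (fun j => i < j) := by
      ext j
      simp only [hT, Finset.mem_filter, Finset.mem_erase, Finset.mem_univ, true_and, and_true]
      constructor
      · rintro ⟨hne, hge⟩
        exact lt_of_le_of_ne (not_lt.1 hge) (Ne.symm hne)
      · intro h
        exact ⟨h.ne', not_lt.2 h.le⟩
    have c1 : ∏ j ∈ Finset.univ.filter (fun j => j < i), q j (u j)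
        = ∏ j ∈ Finset.univ.filter (fun j => j < i), R j (u j) :=
      Finset.prod_congr rfl (fun j hj => by
        have hji : j < i := (Finset.mem_filter.1 hj).2
        rw [hR]; simp [hji])
    have c2 : ∏ j ∈ Finset.univ.filter (fun j => i < j), p j (u j)
        = ∏ j ∈ Finset.univ.filter (fun j => i < j), R j (u j) :=
      Finset.prod_congr rfl (fun j hj => by
        have hji : i < j := (Finset.mem_filter.1 hj).2
        rw [hR]; simp [not_lt.2 hji.le])
    rw [hsplit, e1, e2, ← c1, ← c2]
  have hA' : A i x = ∑ u : ∀ j, U j, if u i = x then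
      (∏ j ∈ T, p j (u j)) * F u else 0 := by
    rw [hA, hT]
    simp_rw [Finset.filter_ne']
  -- telescoping
  have hdiff : Atil i x - A i x = ∑ k ∈ T, ∑ u : ∀ j, U j, if u i = x then
      (∏ j ∈ T.filter (· < k), R j (u j)) * (R k (u k) - p k (u k))
        * (∏ j ∈ T.filter (fun j => k < j), p j (u j)) * F u else 0 := by
    rw [hAtil', hA', ← Finset.sum_sub_distrib]
    rw [Finset.sum_comm]
    apply Finset.sum_congr rfl
    intro u _
    by_cases h : u i = x
    · simp only [if_pos h]
      rw [← sub_mul, prod_telescope T (fun j => R j (u j)) (fun j => p j (u j)),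
        Finset.sum_mul]
    · simp only [if_neg h, sub_zero, Finset.sum_const_zero]
  rw [hdiff]
  calc |∑ k ∈ T, ∑ u : ∀ j, U j, if u i = x then
      (∏ j ∈ T.filter (· < k), R j (u j)) * (R k (u k) - p k (u k))
        * (∏ j ∈ T.filter (fun j => k < j), p j (u j)) * F u else 0|
      ≤ ∑ k ∈ T, |∑ u : ∀ j, U j, if u i = x then
      (∏ j ∈ T.filter (· < k), R j (u j)) * (R k (u k) - p k (u k))
        * (∏ j ∈ T.filter (fun j => k < j), p j (u j)) * F u else 0| :=
        Finset.abs_sum_le_sum_abs _ _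
    _ ≤ ∑ k ∈ T, M * ∑ y, |q k y - p k y| := by
        apply Finset.sum_le_sum
        intro k hk
        by_cases hki : k < i
        · have ecast : ∀ u : ∀ j, U j,
              (∏ j ∈ T.filter (· < k), R j (u j)) * (R k (u k) - p k (u k))
                * (∏ j ∈ T.filter (fun j => k < j), p j (u j))
              = (∏ j ∈ T.filter (· < k), q j (u j)) * (q k (u k) - p k (u k))
                * (∏ j ∈ T.filter (fun j => k < j), p j (u j)) := by
            intro u
            have c1 : ∏ j ∈ T.filter (· < k), R j (u j)
                = ∏ j ∈ T.filter (· < k), q j (u j) :=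
              Finset.prod_congr rfl (fun j hj => by
                have hji : j < i := lt_trans (Finset.mem_filter.1 hj).2 hki
                rw [hR]; simp [hji])
            have c2 : R k (u k) = q k (u k) := by rw [hR]; simp [hki]
            rw [c1, c2]
          simp_rw [ecast]
          exact term_bound p q M hp0 hp1 hq0 hq1 F hF i x k hk
        · have hzero : ∀ u : ∀ j, U j, R k (u k) - p k (u k) = 0 := by
            intro u
            rw [hR]
            simp only [if_neg hki, sub_self]
          have : (∑ u : ∀ j, U j, if u i = x then
              (∏ j ∈ T.filter (· < k), R j (u j)) * (R k (u k) - p k (u k))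
                * (∏ j ∈ T.filter (fun j => k < j), p j (u j)) * F u else 0) = 0 := by
            apply Finset.sum_eq_zero
            intro u _
            rw [hzero u]
            simp
          rw [this, abs_zero]
          exact mul_nonneg hMnn (Finset.sum_nonneg (fun y _ => abs_nonneg _))
    _ ≤ ∑ k, M * ∑ y, |q k y - p k y| := by
        apply Finset.sum_le_sum_of_subset_of_nonneg (Finset.subset_univ T)
        intro k _ _
        exact mul_nonneg hMnn (Finset.sum_nonneg (fun y _ => abs_nonneg _))
    _ = M * ∑ k, ∑ y, |q k y - p k y| := by rw [Finset.mul_sum]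



/-- The cross term between per-agent policy differences and advantage
discrepancies is bounded by `2nM` times the sum of the KL divergences. -/
theorem cross_term_kl_bound
    {n : ℕ} {U : Fin n → Type*} [∀ i, Fintype (U i)] [∀ i, Nonempty (U i)]
    [∀ i, DecidableEq (U i)]
    (p q : ∀ i, U i → ℝ) (M : ℝ)
    (hp0 : ∀ i, ∀ x : U i, 0 < p i x) (hp1 : ∀ i, ∑ x : U i, p i x = 1)
    (hq0 : ∀ i, ∀ x : U i, 0 ≤ q i x) (hq1 : ∀ i, ∑ x : U i, q i x = 1)
    (F : (∀ i, U i) → ℝ) (hF : ∀ u, |F u| ≤ M)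
    (Atil A : ∀ i, U i → ℝ)
    (hAtil : ∀ i, ∀ x : U i, Atil i x =
      ∑ u : ∀ j, U j, if u i = x then
          (∏ j ∈ Finset.univ.filter (fun j => j < i), q j (u j)) *
            (∏ j ∈ Finset.univ.filter (fun j => i < j), p j (u j)) * F u
        else 0)
    (hA : ∀ i, ∀ x : U i, A i x =
      ∑ u : ∀ j, U j, if u i = x then
          (∏ j ∈ Finset.univ.filter (fun j => j ≠ i), p j (u j)) * F u
        else 0) :
    ∑ i, ∑ x : U i, (q i x - p i x) * (Atil i x - A i x)
      ≤ 2 * n * M * ∑ j, ∑ y : U j, q j y * Real.log (q j y / p j y) := by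
  classical
  have hp0' : ∀ i, ∀ x : U i, 0 ≤ p i x := fun i x => (hp0 i x).le
  set a : Fin n → ℝ := fun k => ∑ y, |q k y - p k y| with ha
  set S : ℝ := ∑ k, a k with hS
  have hMnn : 0 ≤ M := le_trans (abs_nonneg _) (hF (Classical.arbitrary _))
  have hannn : ∀ k, 0 ≤ a k := fun k => Finset.sum_nonneg (fun y _ => abs_nonneg _)
  have hSnn : 0 ≤ S := Finset.sum_nonneg (fun k _ => hannn k)
  have hadv : ∀ i, ∀ x : U i, |Atil i x - A i x| ≤ M * S := fun i x =>
    adv_diff_bound p q M hp0' hp1 hq0 hq1 F hF Atil A hAtil hA i x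
  have step1 : ∑ i, ∑ x : U i, (q i x - p i x) * (Atil i x - A i x)
      ≤ M * S ^ 2 := by
    have : ∀ i, ∑ x : U i, (q i x - p i x) * (Atil i x - A i x) ≤ a i * (M * S) := by
      intro i
      calc ∑ x : U i, (q i x - p i x) * (Atil i x - A i x)
          ≤ ∑ x : U i, |q i x - p i x| * (M * S) := by
            apply Finset.sum_le_sum
            intro x _
            calc (q i x - p i x) * (Atil i x - A i x)
                ≤ |(q i x - p i x) * (Atil i x - A i x)| := le_abs_self _
              _ = |q i x - p i x| * |Atil i x - A i x| := abs_mul _ _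
              _ ≤ |q i x - p i x| * (M * S) :=
                  mul_le_mul_of_nonneg_left (hadv i x) (abs_nonneg _)
        _ = a i * (M * S) := by rw [ha, ← Finset.sum_mul]
    calc ∑ i, ∑ x : U i, (q i x - p i x) * (Atil i x - A i x)
        ≤ ∑ i, a i * (M * S) := Finset.sum_le_sum (fun i _ => this i)
      _ = S * (M * S) := by rw [← Finset.sum_mul, ← hS]
      _ = M * S ^ 2 := by ring
  have hcs : S ^ 2 ≤ (n : ℝ) * ∑ i, a i ^ 2 := by
    have := sq_sum_le_card_mul_sum_sq (s := (Finset.univ : Finset (Fin n))) (f := a)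
    simpa using this
  have hpin : ∀ i, a i ^ 2 ≤ 2 * ∑ y, q i y * Real.log (q i y / p i y) := fun i =>
    pinsker (p i) (q i) (hp0 i) (hp1 i) (hq0 i) (hq1 i)
  calc ∑ i, ∑ x : U i, (q i x - p i x) * (Atil i x - A i x)
      ≤ M * S ^ 2 := step1
    _ ≤ M * ((n : ℝ) * ∑ i, a i ^ 2) := by
        exact mul_le_mul_of_nonneg_left hcs hMnn
    _ ≤ M * ((n : ℝ) * ∑ i, 2 * ∑ y, q i y * Real.log (q i y / p i y)) := by
        apply mul_le_mul_of_nonneg_left _ hMnn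
        apply mul_le_mul_of_nonneg_left _ (Nat.cast_nonneg n)
        exact Finset.sum_le_sum (fun i _ => hpin i)
    _ = 2 * n * M * ∑ j, ∑ y : U j, q j y * Real.log (q j y / p j y) := by
        rw [← Finset.mul_sum]
        ring
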